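/- In the numeration system with u_0 = 1, u_1 = s+t, u_n = (s+t−1)u_{n−1} + s·u_{n−2}, suppose R(m) has tail digits d_{2k+1} r q r q ... r q r (ending in r, with r, q alternating, preceded by d_{2k+1} ≤ q where d_{2k+1} = q implies d_{2k+2} < r). Then R(m+1) = (d_{2k+1}+1)·u_{2k+1} + Σ_{i ≥ 2k+2} d_i u_i; in particular m+1 is old (its representation ends in an odd number of zeros). -/

import Mathlib

lemma key_sum (s t : ℕ) (hs : 0 < s) (ht : 0 < t) (u : ℕ → ℕ)
    (hu0 : u 0 = 1) (hu1 : u 1 = s + t)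
    (hur : ∀ n, u (n + 2) = (s + t - 1) * u (n + 1) + s * u n)
    (g : ℕ → ℕ) :
    ∀ k, (∀ j, j ≤ k → g (2 * j) = s + t - 1) → (∀ j, j < k → g (2 * j + 1) = s - 1) →
      (∑ i ∈ Finset.range (2 * k + 1), g i * u i) + 1 = u (2 * k + 1) := by
  intro k
  induction k with
  | zero =>
    intro hr hq
    simp [hr 0 (le_refl 0), hu0, hu1]
    omega
  | succ k ih =>
    intro hr hq
    have h1 : 2 * (k + 1) + 1 = (2 * k + 2) + 1 := by ring
    obtain ⟨s₁, rfl⟩ : ∃ s₁, s = s₁ + 1 := ⟨s - 1, by omega⟩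
    have hih := ih (fun j hj => hr j (by omega)) (fun j hj => hq j (by omega))
    rw [h1, Finset.sum_range_succ, Finset.sum_range_succ]
    have hg1 : g (2 * k + 1) = s₁ + 1 - 1 := hq k (by omega)
    have hg2 : g (2 * k + 2) = s₁ + 1 + t - 1 := by
      have := hr (k + 1) (le_refl _)
      simpa [mul_add] using this
    have hu3 : u (2 * k + 2 + 1) = (s₁ + 1 + t - 1) * u (2 * k + 2) + (s₁ + 1) * u (2 * k + 1) :=
      hur (2 * k + 1)
    rw [hu3, hg1, hg2]
    have e1 : s₁ + 1 - 1 = s₁ := by omega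
    have e2 : s₁ + 1 + t - 1 = s₁ + t := by omega
    rw [e1, e2]
    nlinarith [hih]

/-- In the numeration system with `u 0 = 1`, `u 1 = s + t`,
`u n = (s+t-1) u (n-1) + s u (n-2)` (digits `dᵢ ≤ r := s+t-1`, with `d_{i+1} = r → dᵢ ≤ q := s-1`),
if the representation `d` of `m` has tail `d_{2k+1} r q r q … r q r` (i.e. `d (2j) = r`
for `j ≤ k`, `d (2j+1) = q` for `j < k`, `d (2k+1) ≤ q`, and `d (2k+1) = q → d (2k+2) < r`),
then the representation `d'` of `m + 1` is `(d (2k+1) + 1) u_{2k+1} + Σ_{i ≥ 2k+2} dᵢ uᵢ`;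
in particular `m + 1` is old (its representation ends in an odd number of zeros). -/
theorem stmt_14 (s t : ℕ) (hs : 0 < s) (ht : 0 < t) (u : ℕ → ℕ)
    (hu0 : u 0 = 1) (hu1 : u 1 = s + t)
    (hur : ∀ n, u (n + 2) = (s + t - 1) * u (n + 1) + s * u n)
    (m : ℕ) (d : ℕ →₀ ℕ)
    (hdig : ∀ i, d i ≤ s + t - 1) (hcond : ∀ i, d (i + 1) = s + t - 1 → d i ≤ s - 1)
    (hval : m = d.sum fun i c => c * u i)
    (k : ℕ)
    (htailr : ∀ j, j ≤ k → d (2 * j) = s + t - 1)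
    (htailq : ∀ j, j < k → d (2 * j + 1) = s - 1)
    (hd : d (2 * k + 1) ≤ s - 1)
    (hd' : d (2 * k + 1) = s - 1 → d (2 * k + 2) < s + t - 1) :
    ∃ d' : ℕ →₀ ℕ,
      (∀ i, d' i ≤ s + t - 1) ∧ (∀ i, d' (i + 1) = s + t - 1 → d' i ≤ s - 1) ∧
      m + 1 = (d'.sum fun i c => c * u i) ∧
      d' (2 * k + 1) = d (2 * k + 1) + 1 ∧
      (∀ i, i < 2 * k + 1 → d' i = 0) ∧
      (∀ i, 2 * k + 1 < i → d' i = d i) ∧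
      d' (2 * k + 1) ≠ 0 := by
  classical
  set D : ℕ →₀ ℕ :=
    Finsupp.single (2 * k + 1) (d (2 * k + 1) + 1) + d.filter (fun i => 2 * k + 1 < i) with hD
  have happ : ∀ i, D i = if i = 2 * k + 1 then d (2 * k + 1) + 1
      else if 2 * k + 1 < i then d i else 0 := by
    intro i
    rw [hD, Finsupp.add_apply, Finsupp.single_apply, Finsupp.filter_apply]
    by_cases h1 : i = 2 * k + 1
    · simp [h1]
    · by_cases h2 : 2 * k + 1 < i
      · simp [h1, h2, Ne.symm h1]
      · simp [h1, h2, Ne.symm h1]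
  refine ⟨D, ?_, ?_, ?_, ?_, ?_, ?_, ?_⟩
  · intro i
    rw [happ i]
    split_ifs with h1 h2
    · omega
    · exact hdig i
    · omega
  · intro i hi
    rw [happ (i + 1)] at hi
    rw [happ i]
    rcases lt_trichotomy (i + 1) (2 * k + 1) with hA | hB | hC
    · have h1 : i + 1 ≠ 2 * k + 1 := by omega
      have h2 : ¬ (2 * k + 1 < i + 1) := by omega
      simp [h1, h2, show i ≠ 2 * k by omega] at hi
      omega
    · have h1 : i ≠ 2 * k + 1 := by omega
      have h2 : ¬ (2 * k + 1 < i) := by omega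
      simp [h1, h2]
    · have h1 : i + 1 ≠ 2 * k + 1 := by omega
      simp [h1, hC, show i ≠ 2 * k by omega] at hi
      by_cases h2 : i = 2 * k + 1
      · have h3 : i + 1 = 2 * k + 2 := by omega
        rw [h3] at hi
        have hne : d (2 * k + 1) ≠ s - 1 := by
          intro h
          have := hd' h
          omega
        simp [h2]
        omega
      · have h3 : 2 * k + 1 < i := by omega
        simp [h2, h3]
        exact hcond i hi
  · -- value
    set N : ℕ := max (2 * k + 2) (d.support.sup id + 1) with hN
    have hsub : d.support ⊆ Finset.range N := by
      intro i hi
      have : i ≤ d.support.sup id := Finset.le_sup (f := id) hi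
      simp only [Finset.mem_range]
      omega
    have hsubD : D.support ⊆ Finset.range N := by
      intro i hi
      have hiz : D i ≠ 0 := Finsupp.mem_support_iff.mp hi
      rw [happ i] at hiz
      simp only [Finset.mem_range]
      by_cases h1 : i = 2 * k + 1
      · omega
      · by_cases h2 : 2 * k + 1 < i
        · have : d i ≠ 0 := by simpa [h1, h2] using hiz
          have := hsub (Finsupp.mem_support_iff.mpr this)
          simpa using this
        · simp [h1, h2] at hiz
    have hsum : d.sum (fun i c => c * u i) = ∑ i ∈ Finset.range N, d i * u i :=
      Finsupp.sum_of_support_subset d hsub _ (by intros; simp)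
    have hsumD : D.sum (fun i c => c * u i) = ∑ i ∈ Finset.range N, D i * u i :=
      Finsupp.sum_of_support_subset D hsubD _ (by intros; simp)
    have hNk : 2 * k + 2 ≤ N := le_max_left _ _
    have hsplit : ∀ f : ℕ → ℕ, ∑ i ∈ Finset.range N, f i =
        (∑ i ∈ Finset.range (2 * k + 1), f i) + f (2 * k + 1) +
          ∑ i ∈ Finset.Ico (2 * k + 2) N, f i := by
      intro f
      rw [Finset.range_eq_Ico, ← Finset.sum_Ico_consecutive _ (Nat.zero_le (2 * k + 2)) hNk,
        ← Finset.range_eq_Ico, Finset.sum_range_succ]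
    have hkey := key_sum s t hs ht u hu0 hu1 hur (fun i => d i) k htailr htailq
    rw [hval, hsum, hsumD, hsplit (fun i => d i * u i), hsplit (fun i => D i * u i)]
    have hz : ∑ i ∈ Finset.range (2 * k + 1), D i * u i = 0 := by
      apply Finset.sum_eq_zero
      intro i hi
      simp only [Finset.mem_range] at hi
      rw [happ i]
      have h1 : i ≠ 2 * k + 1 := by omega
      have h2 : ¬ (2 * k + 1 < i) := by omega
      simp [h1, h2]
    have heq : ∑ i ∈ Finset.Ico (2 * k + 2) N, D i * u i =
        ∑ i ∈ Finset.Ico (2 * k + 2) N, d i * u i := by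
      apply Finset.sum_congr rfl
      intro i hi
      simp only [Finset.mem_Ico] at hi
      rw [happ i]
      have h1 : i ≠ 2 * k + 1 := by omega
      have h2 : 2 * k + 1 < i := by omega
      simp [h1, h2]
    rw [hz, heq]
    have hD1 : D (2 * k + 1) = d (2 * k + 1) + 1 := by rw [happ]; simp
    rw [hD1]
    have := hkey
    nlinarith [this]
  · rw [happ]; simp
  · intro i hi
    rw [happ]
    have h1 : i ≠ 2 * k + 1 := by omega
    have h2 : ¬ (2 * k + 1 < i) := by omega
    simp [h1, h2]
  · intro i hi
    rw [happ]
    have h1 : i ≠ 2 * k + 1 := by omega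
    simp [h1, hi]
  · rw [happ]; simp
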